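/- Let a, b, c, d, e > 0 with de ≥ 3abc and d+e ≥ max{a+b+c, (2(ab+bc+ca)+3(a+b+c)−6abc−1)/3, 3(ab+bc+ca)−7abc}. Then the odd function f(z) = z·₃F₂(a,b,c;d,e;z²) satisfies Re((1−z²)f′(z)) > 0 on the unit disk; in particular f is univalent (close-to-convex with respect to (1/2)log((1+z)/(1−z))). -/

import Mathlib

open Complex

noncomputable def Acoef (a b c d e : ℝ) (n : ℕ) : ℝ :=
  ((ascPochhammer ℝ n).eval a * (ascPochhammer ℝ n).eval b *
    (ascPochhammer ℝ n).eval c) /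
    ((ascPochhammer ℝ n).eval d * (ascPochhammer ℝ n).eval e *
    (Nat.factorial n : ℝ))

lemma key_ineq (a b c d e x : ℝ) (hx : 0 ≤ x)
    (h1 : a + b + c ≤ d + e)
    (h2 : 2 * (a*b + b*c + c*a) + 3 * (a+b+c) - 6*a*b*c - 1 ≤ 3 * (d + e))
    (h3 : 3 * (a*b + b*c + c*a) - 7*a*b*c ≤ d + e)
    (hde : 3*a*b*c ≤ d*e) :
    (2*x+3) * ((a+x)*(b+x)*(c+x)) ≤ (2*x+1)*(x+1)*((d+x)*(e+x)) := by
  nlinarith [mul_nonneg (sub_nonneg.2 h1) (pow_nonneg hx 3),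
    mul_nonneg (by linarith : (0:ℝ) ≤ 3*(d+e) - (2*(a*b+b*c+c*a)+3*(a+b+c)-6*a*b*c-1)) (pow_nonneg hx 2),
    mul_nonneg (sub_nonneg.2 h3) hx,
    mul_nonneg (sub_nonneg.2 hde) (by nlinarith : (0:ℝ) ≤ (2*x+1)*(x+1))]

lemma Acoef_pos {a b c d e : ℝ} (ha : 0 < a) (hb : 0 < b) (hc : 0 < c)
    (hd : 0 < d) (he : 0 < e) (n : ℕ) : 0 < Acoef a b c d e n := by
  have Pa := ascPochhammer_pos n a ha
  have Pb := ascPochhammer_pos n b hb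
  have Pc := ascPochhammer_pos n c hc
  have Pd := ascPochhammer_pos n d hd
  have Pe := ascPochhammer_pos n e he
  have Pf : (0:ℝ) < (Nat.factorial n : ℝ) := by positivity
  exact div_pos (by positivity) (by positivity)

lemma Acoef_zero (a b c d e : ℝ) : Acoef a b c d e 0 = 1 := by
  simp [Acoef]

lemma Acoef_step {a b c d e : ℝ} (ha : 0 < a) (hb : 0 < b) (hc : 0 < c)
    (hd : 0 < d) (he : 0 < e)
    (h1 : a + b + c ≤ d + e)
    (h2 : 2 * (a*b + b*c + c*a) + 3 * (a+b+c) - 6*a*b*c - 1 ≤ 3 * (d + e))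
    (h3 : 3 * (a*b + b*c + c*a) - 7*a*b*c ≤ d + e)
    (hde : 3*a*b*c ≤ d*e) (n : ℕ) :
    (2*(n:ℝ)+3) * Acoef a b c d e (n+1) ≤ (2*(n:ℝ)+1) * Acoef a b c d e n := by
  have Pa := ascPochhammer_pos n a ha
  have Pb := ascPochhammer_pos n b hb
  have Pc := ascPochhammer_pos n c hc
  have Pd := ascPochhammer_pos n d hd
  have Pe := ascPochhammer_pos n e he
  have Pf : (0:ℝ) < (Nat.factorial n : ℝ) := by positivity
  have hn : (0:ℝ) ≤ (n:ℝ) := Nat.cast_nonneg n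
  have hrec : Acoef a b c d e (n+1) * ((d+n)*(e+n)*((n:ℝ)+1)) =
      Acoef a b c d e n * ((a+n)*(b+n)*(c+n)) := by
    simp only [Acoef, ascPochhammer_succ_eval, Nat.factorial_succ]
    push_cast
    field_simp
  have hP : (0:ℝ) < (d+n)*(e+n)*((n:ℝ)+1) := by positivity
  rw [← mul_le_mul_iff_of_pos_right hP]
  have hkey := key_ineq a b c d e n hn h1 h2 h3 hde
  have hApos : 0 < Acoef a b c d e n := Acoef_pos ha hb hc hd he n
  calc (2*(n:ℝ)+3) * Acoef a b c d e (n+1) * ((d+n)*(e+n)*((n:ℝ)+1))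
      = (2*(n:ℝ)+3) * (Acoef a b c d e n * ((a+n)*(b+n)*(c+n))) := by
        rw [mul_assoc, hrec]
    _ = Acoef a b c d e n * ((2*(n:ℝ)+3) * ((a+n)*(b+n)*(c+n))) := by ring
    _ ≤ Acoef a b c d e n * ((2*(n:ℝ)+1)*((n:ℝ)+1)*((d+n)*(e+n))) := by
        exact mul_le_mul_of_nonneg_left hkey hApos.le
    _ = (2*(n:ℝ)+1) * Acoef a b c d e n * ((d+n)*(e+n)*((n:ℝ)+1)) := by ring

lemma Acoef_bound {a b c d e : ℝ} (ha : 0 < a) (hb : 0 < b) (hc : 0 < c)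
    (hd : 0 < d) (he : 0 < e)
    (h1 : a + b + c ≤ d + e)
    (h2 : 2 * (a*b + b*c + c*a) + 3 * (a+b+c) - 6*a*b*c - 1 ≤ 3 * (d + e))
    (h3 : 3 * (a*b + b*c + c*a) - 7*a*b*c ≤ d + e)
    (hde : 3*a*b*c ≤ d*e) (n : ℕ) :
    (2*(n:ℝ)+1) * Acoef a b c d e n ≤ 1 := by
  induction n with
  | zero => simp [Acoef_zero]
  | succ n ih =>
      have hs := Acoef_step ha hb hc hd he h1 h2 h3 hde n
      have : ((n+1:ℕ):ℝ) = (n:ℝ)+1 := by push_cast; ring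
      rw [this]
      calc (2*((n:ℝ)+1)+1) * Acoef a b c d e (n+1)
          = (2*(n:ℝ)+3) * Acoef a b c d e (n+1) := by ring_nf
        _ ≤ (2*(n:ℝ)+1) * Acoef a b c d e n := hs
        _ ≤ 1 := ih

theorem hyp3F2_odd_close_to_convex (a b c d e : ℝ) (ha : 0 < a) (hb : 0 < b) (hc : 0 < c)
    (hd : 0 < d) (he : 0 < e) (hde : d * e ≥ 3 * a * b * c)
    (hsum : d + e ≥ max (max (a + b + c)
      ((2 * (a * b + b * c + c * a) + 3 * (a + b + c) - 6 * a * b * c - 1) / 3))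
      (3 * (a * b + b * c + c * a) - 7 * a * b * c))
    (f : ℂ → ℂ)
    (hf : ∀ z ∈ Metric.ball (0 : ℂ) 1,
      f z = z * ∑' n : ℕ,
        ((((ascPochhammer ℝ n).eval a * (ascPochhammer ℝ n).eval b *
          (ascPochhammer ℝ n).eval c) /
          ((ascPochhammer ℝ n).eval d * (ascPochhammer ℝ n).eval e *
          (Nat.factorial n : ℝ))) : ℂ) * (z ^ 2) ^ n) :
    ∀ z ∈ Metric.ball (0 : ℂ) 1, 0 < ((1 - z ^ 2) * deriv f z).re := by
  -- extract the three sum conditions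
  have h1 : a + b + c ≤ d + e := le_trans (le_max_of_le_left (le_max_left _ _)) hsum
  have h2 : 2 * (a*b + b*c + c*a) + 3 * (a+b+c) - 6*a*b*c - 1 ≤ 3 * (d + e) := by
    have := le_trans (le_max_of_le_left (le_max_right _ _)) hsum
    linarith
  have h3 : 3 * (a*b + b*c + c*a) - 7*a*b*c ≤ d + e :=
    le_trans (le_max_right _ _) hsum
  have hde' : 3*a*b*c ≤ d*e := by linarith
  set A : ℕ → ℝ := Acoef a b c d e with hAdef
  have hApos : ∀ n, 0 < A n := Acoef_pos ha hb hc hd he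
  have hstep : ∀ n : ℕ, (2*(n:ℝ)+3) * A (n+1) ≤ (2*(n:ℝ)+1) * A n :=
    Acoef_step ha hb hc hd he h1 h2 h3 hde'
  have hAbd : ∀ n : ℕ, (2*(n:ℝ)+1) * A n ≤ 1 :=
    Acoef_bound ha hb hc hd he h1 h2 h3 hde'
  intro z hz
  set ρ : ℝ := ‖z‖ with hρdef
  have hρ0 : 0 ≤ ρ := norm_nonneg z
  have hρ1 : ρ < 1 := mem_ball_zero_iff.mp hz
  set r : ℝ := (1 + ρ) / 2 with hrdef
  have hr0 : 0 < r := by positivity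
  have hr1 : r < 1 := by rw [hrdef]; linarith
  have hρr : ρ < r := by rw [hrdef]; linarith
  -- the series of derivatives bound
  set u : ℕ → ℝ := fun n => r ^ (2*n) with hudef
  have hu : Summable u := by
    have : Summable (fun n : ℕ => (r^2) ^ n) :=
      summable_geometric_of_lt_one (by positivity) (by nlinarith)
    exact this.congr fun n => by rw [← pow_mul]
  set g : ℕ → ℂ → ℂ := fun n w => ((A n : ℝ) : ℂ) * w ^ (2*n+1) with hgdef
  set g' : ℕ → ℂ → ℂ := fun n w => ((A n : ℝ) : ℂ) * (2*(n:ℂ)+1) * w ^ (2*n) with hg'def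
  have hg : ∀ n w, HasDerivAt (g n) (g' n w) w := by
    intro n w
    have h := (hasDerivAt_pow (2*n+1) w).const_mul ((A n : ℝ) : ℂ)
    convert h using 1
    · rfl
    · rfl
    simp only [Nat.add_sub_cancel, hg'def]
    push_cast
    ring
  have hg'bd : ∀ n, ∀ w ∈ Metric.ball (0:ℂ) r, ‖g' n w‖ ≤ u n := by
    intro n w hw
    have hwr : ‖w‖ ≤ r := (mem_ball_zero_iff.mp hw).le
    have hc1 : (2*(n:ℂ)+1) = ((2*(n:ℝ)+1 : ℝ) : ℂ) := by push_cast; ring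
    have hn1 : ‖(2*(n:ℂ)+1)‖ = 2*(n:ℝ)+1 := by
      rw [hc1, Complex.norm_real, Real.norm_eq_abs, abs_of_pos (by positivity)]
    have : ‖g' n w‖ = (A n * (2*(n:ℝ)+1)) * ‖w‖^(2*n) := by
      simp only [hg'def, norm_mul, norm_pow, hn1, Complex.norm_real, Real.norm_eq_abs,
        abs_of_pos (hApos n)]
    rw [this, hudef]
    have hb1 : A n * (2*(n:ℝ)+1) ≤ 1 := by linarith [hAbd n]
    have hb2 : ‖w‖^(2*n) ≤ r^(2*n) := pow_le_pow_left₀ (norm_nonneg w) hwr _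
    calc A n * (2*(n:ℝ)+1) * ‖w‖^(2*n) ≤ 1 * (r^(2*n)) := by
          apply mul_le_mul hb1 hb2 (by positivity) (by norm_num)
      _ = r^(2*n) := one_mul _
  have h0mem : (0:ℂ) ∈ Metric.ball (0:ℂ) r := Metric.mem_ball_self hr0
  have hzmem : z ∈ Metric.ball (0:ℂ) r := mem_ball_zero_iff.mpr hρr
  have hsum0 : Summable fun n => g n 0 := by
    have : (fun n => g n 0) = fun _ => (0:ℂ) := by
      funext n; simp [hgdef]
    rw [this]; exact summable_zero
  have hder : HasDerivAt (fun w => ∑' n, g n w) (∑' n, g' n z) z :=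
    hasDerivAt_tsum_of_isPreconnected hu Metric.isOpen_ball
      (convex_ball (0:ℂ) r).isPreconnected (fun n y _ => hg n y)
      hg'bd h0mem hsum0 hzmem
  -- f agrees with the sum near z
  have heq : f =ᶠ[nhds z] fun w => ∑' n, g n w := by
    filter_upwards [Metric.isOpen_ball.mem_nhds hzmem] with w hw
    have hw1 : w ∈ Metric.ball (0:ℂ) 1 :=
      mem_ball_zero_iff.mpr (lt_trans (mem_ball_zero_iff.mp hw) hr1)
    rw [hf w hw1, ← tsum_mul_left]
    refine tsum_congr fun n => ?_
    simp only [hgdef, hAdef, Acoef]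
    rw [← pow_mul]
    push_cast
    ring
  have hderiv : deriv f z = ∑' n, g' n z :=
    (hder.congr_of_eventuallyEq heq).deriv
  -- summability facts
  have hs1 : Summable (fun n => g' n z) :=
    Summable.of_norm_bounded hu (fun n => hg'bd n z hzmem)
  have hs2 : Summable (fun n => ((A (n+1) : ℝ):ℂ) * (2*(n:ℂ)+3) * z^(2*n+2)) := by
    have h := (summable_nat_add_iff 1).mpr hs1
    exact h.congr fun n => by simp only [hg'def]; push_cast; ring
  have hs3 : Summable (fun n => ((A n : ℝ):ℂ) * (2*(n:ℂ)+1) * z^(2*n+2)) := by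
    have h := hs1.mul_left (z^2)
    exact h.congr fun n => by simp only [hg'def]; ring
  -- compute (1 - z^2) * deriv
  have hkey : (1 - z^2) * ∑' n, g' n z =
      1 + ∑' n, (((A (n+1) : ℝ):ℂ) * (2*(n:ℂ)+3) - ((A n : ℝ):ℂ) * (2*(n:ℂ)+1)) * z^(2*n+2) := by
    have e1 : (∑' n, g' n z) = 1 + ∑' n, ((A (n+1) : ℝ):ℂ) * (2*(n:ℂ)+3) * z^(2*n+2) := by
      rw [Summable.tsum_eq_zero_add hs1]
      congr 1
      · simp [hg'def, hAdef, Acoef_zero]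
      · exact tsum_congr fun n => by simp only [hg'def]; push_cast; ring
    have e2 : z^2 * ∑' n, g' n z = ∑' n, ((A n : ℝ):ℂ) * (2*(n:ℂ)+1) * z^(2*n+2) := by
      rw [← tsum_mul_left]
      exact tsum_congr fun n => by simp only [hg'def]; ring
    have e3 : (1 - z^2) * ∑' n, g' n z = (∑' n, g' n z) - z^2 * ∑' n, g' n z := by ring
    rw [e3, e2, e1, add_sub_assoc, ← Summable.tsum_sub hs2 hs3]
    congr 1
    exact tsum_congr fun n => by ring
  rw [hderiv, hkey]
  -- estimate the real part
  set w : ℕ → ℂ := fun n =>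
    (((A (n+1) : ℝ):ℂ) * (2*(n:ℂ)+3) - ((A n : ℝ):ℂ) * (2*(n:ℂ)+1)) * z^(2*n+2) with hwdef
  set C : ℕ → ℝ := fun n => (2*(n:ℝ)+1) * A n - (2*(n:ℝ)+3) * A (n+1) with hCdef
  have hC0 : ∀ n, 0 ≤ C n := fun n => by simp only [hCdef]; linarith [hstep n]
  have hCrange : ∀ n : ℕ, ∑ i ∈ Finset.range n, C i ≤ 1 := by
    intro n
    have hC' : ∀ i : ℕ, C i =
        (fun j : ℕ => (2*(j:ℝ)+1) * A j) i - (fun j : ℕ => (2*(j:ℝ)+1) * A j) (i+1) := by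
      intro i; simp only [hCdef]; push_cast; ring
    have hA0 : A 0 = 1 := Acoef_zero a b c d e
    calc ∑ i ∈ Finset.range n, C i
        = ∑ i ∈ Finset.range n,
            ((fun j : ℕ => (2*(j:ℝ)+1) * A j) i - (fun j : ℕ => (2*(j:ℝ)+1) * A j) (i+1)) :=
          Finset.sum_congr rfl fun i _ => hC' i
      _ = (2*((0:ℕ):ℝ)+1) * A 0 - (2*(n:ℝ)+1) * A n :=
          Finset.sum_range_sub' (fun j : ℕ => (2*(j:ℝ)+1) * A j) n
      _ ≤ 1 := by
          have := hApos n
          have hn : (0:ℝ) ≤ (n:ℝ) := Nat.cast_nonneg n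
          have : 0 ≤ (2*(n:ℝ)+1) * A n := by positivity
          simp only [Nat.cast_zero]
          nlinarith [hA0]
  have hCsum : Summable C := summable_of_sum_range_le hC0 hCrange
  have hCle : ∑' n, C n ≤ 1 := Real.tsum_le_of_sum_range_le hC0 hCrange
  have hwnorm : ∀ n, ‖w n‖ ≤ C n * ρ^2 := by
    intro n
    have hc2 : (((A (n+1) : ℝ):ℂ) * (2*(n:ℂ)+3) - ((A n : ℝ):ℂ) * (2*(n:ℂ)+1))
        = (((A (n+1)) * (2*(n:ℝ)+3) - (A n) * (2*(n:ℝ)+1) : ℝ) : ℂ) := by push_cast; ring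
    have habs : |A (n+1) * (2*(n:ℝ)+3) - A n * (2*(n:ℝ)+1)| = C n := by
      rw [abs_of_nonpos (by linarith [hstep n])]
      simp only [hCdef]; ring
    have hnw : ‖w n‖ = C n * ρ^(2*n+2) := by
      simp only [hwdef, norm_mul, hc2, Complex.norm_real, Real.norm_eq_abs, norm_pow, habs,
        ← hρdef]
    rw [hnw]
    have hple : ρ^(2*n+2) ≤ ρ^2 := pow_le_pow_of_le_one hρ0 hρ1.le (by omega)
    exact mul_le_mul_of_nonneg_left hple (hC0 n)
  have hwsum : Summable fun n => ‖w n‖ :=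
    Summable.of_nonneg_of_le (fun n => norm_nonneg _) hwnorm (hCsum.mul_right _)
  have hnormt : ‖∑' n, w n‖ ≤ ∑' n, ‖w n‖ := norm_tsum_le_tsum_norm hwsum
  have ht2 : ∑' n, ‖w n‖ ≤ (∑' n, C n) * ρ^2 := by
    calc ∑' n, ‖w n‖ ≤ ∑' n, C n * ρ^2 := Summable.tsum_le_tsum hwnorm hwsum (hCsum.mul_right _)
      _ = (∑' n, C n) * ρ^2 := tsum_mul_right
  have hfinal : ‖∑' n, w n‖ ≤ ρ^2 := by
    have hmul : (∑' n, C n) * ρ^2 ≤ 1 * ρ^2 :=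
      mul_le_mul_of_nonneg_right hCle (by positivity)
    linarith
  have hre : |(∑' n, w n).re| ≤ ρ^2 := by
    have h := Complex.abs_re_le_norm (∑' n, w n)
    linarith
  have hρ2 : ρ^2 < 1 := by nlinarith
  have hlow : -(ρ^2) ≤ (∑' n, w n).re := neg_le_of_abs_le hre
  simp only [Complex.add_re, Complex.one_re]
  linarith
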